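/- There is no 12×12 positive semidefinite complex matrix M (a state on ℂ^3⊗ℂ^4) whose partial transpose M^Γ has inertia (8,0,4), nor one with inertia (8,1,3), nor one with inertia (9,0,3). -/

import Mathlib

open Matrix Kronecker
open scoped ComplexOrder
open Polynomial

/-- Partial transpose on the first factor of an `m × n` bipartite system:
`(ptrans M) ((i,k),(j,l)) = M ((j,k),(i,l))`. -/
def ptrans {m n : ℕ} (M : Matrix (Fin m × Fin n) (Fin m × Fin n) ℂ) :
    Matrix (Fin m × Fin n) (Fin m × Fin n) ℂ :=
  Matrix.of fun p q => M (q.1, p.2) (p.1, q.2)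

/-- Number of negative eigenvalues (with multiplicity) of a Hermitian matrix. -/
noncomputable def iNeg {ι : Type} [Fintype ι] [DecidableEq ι] {M : Matrix ι ι ℂ}
    (hM : M.IsHermitian) : ℕ :=
  (Finset.univ.filter fun i => hM.eigenvalues i < 0).card

/-- Number of zero eigenvalues (with multiplicity) of a Hermitian matrix. -/
noncomputable def iZero {ι : Type} [Fintype ι] [DecidableEq ι] {M : Matrix ι ι ℂ}
    (hM : M.IsHermitian) : ℕ :=
  (Finset.univ.filter fun i => hM.eigenvalues i = 0).card

/-- Number of positive eigenvalues (with multiplicity) of a Hermitian matrix. -/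
noncomputable def iPos {ι : Type} [Fintype ι] [DecidableEq ι] {M : Matrix ι ι ℂ}
    (hM : M.IsHermitian) : ℕ :=
  (Finset.univ.filter fun i => 0 < hM.eigenvalues i).card

lemma exists_prod_vec (w : Fin 4 → (Fin 3 × Fin 4) → ℂ) :
    ∃ (u : Fin 3 → ℂ) (v : Fin 4 → ℂ), u ≠ 0 ∧ v ≠ 0 ∧
      ∀ k, ∑ p : Fin 3 × Fin 4, star (w k p) * (u p.1 * v p.2) = 0 := by
  set a : Fin 4 → Fin 4 → Fin 3 → ℂ := fun k l i => star (w k (i, l)) with ha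
  set B : (Fin 3 → ℂ) → Matrix (Fin 4) (Fin 4) ℂ :=
    fun u => Matrix.of fun k l => ∑ i, a k l i * u i with hB
  have hBsmul : ∀ (s : ℂ) u, B (s • u) = s • B u := by
    intro s u
    ext k l
    simp only [hB, Matrix.of_apply, Matrix.smul_apply, smul_eq_mul, Finset.mul_sum,
      Pi.smul_apply]
    exact Finset.sum_congr rfl fun i _ => by ring
  have hdet : ∀ (s : ℂ) u, (B (s • u)).det = s ^ 4 * (B u).det := by
    intro s u
    rw [hBsmul, Matrix.det_smul]
    simp
  suffices h : ∃ u : Fin 3 → ℂ, u ≠ 0 ∧ (B u).det = 0 by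
    obtain ⟨u, hu, hdet0⟩ := h
    obtain ⟨v, hv, hBv⟩ := (Matrix.exists_mulVec_eq_zero_iff).2 hdet0
    refine ⟨u, v, hu, hv, fun k => ?_⟩
    have h1 : (B u *ᵥ v) k = 0 := congrFun hBv k
    rw [← h1]
    rw [Fintype.sum_prod_type, Finset.sum_comm]
    simp only [mulVec, dotProduct, hB, Matrix.of_apply, Finset.sum_mul]
    exact Finset.sum_congr rfl fun l _ => Finset.sum_congr rfl fun i _ => by simp [ha]; ring
  set NQ : Matrix (Fin 4) (Fin 4) ℂ[X] :=
    Matrix.of fun k l => C (a k l 0) * X + C (a k l 1) with hNQ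
  set NR : Matrix (Fin 4) (Fin 4) ℂ[X] :=
    Matrix.of fun k l => C (a k l 0) + C (a k l 1) * X with hNR
  have hQ : ∀ t : ℂ, (NQ.det).eval t = (B ![t, 1, 0]).det := by
    intro t
    rw [← Polynomial.coe_evalRingHom, RingHom.map_det]
    congr 1
    ext k l
    simp [hNQ, hB, Fin.sum_univ_three]
  have hR : ∀ s : ℂ, (NR.det).eval s = (B ![1, s, 0]).det := by
    intro s
    rw [← Polynomial.coe_evalRingHom, RingHom.map_det]
    congr 1
    ext k l
    simp [hNR, hB, Fin.sum_univ_three]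
  by_cases hroot : ∃ t : ℂ, (NQ.det).eval t = 0
  · obtain ⟨t, ht⟩ := hroot
    refine ⟨![t, 1, 0], ?_, by rw [← hQ]; exact ht⟩
    intro h0
    have := congrFun h0 1
    simp at this
  · push_neg at hroot
    have hdegQ : NQ.det.degree ≤ 0 := by
      by_contra h
      push_neg at h
      obtain ⟨z, hz⟩ := Complex.exists_root h
      exact hroot z hz
    set c := NQ.det.coeff 0 with hc
    have hQc : NQ.det = C c := Polynomial.eq_C_of_degree_le_zero hdegQ
    have hRs : ∀ s : ℂ, s ≠ 0 → (NR.det).eval s = c * s ^ 4 := by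
      intro s hs
      have h1 : ![(1 : ℂ), s, 0] = s • ![s⁻¹, 1, 0] := by
        ext i
        fin_cases i <;> simp [mul_inv_cancel₀ hs]
      rw [hR, h1, hdet, ← hQ, hQc]
      simp [mul_comm]
    have hReq : NR.det = C c * X ^ 4 := by
      have hz : NR.det - C c * X ^ 4 = 0 := by
        apply Polynomial.eq_zero_of_infinite_isRoot
        apply Set.Infinite.mono (s := {s : ℂ | s ≠ 0})
        · intro s hs
          simp only [Set.mem_setOf_eq, IsRoot, eval_sub, eval_mul, eval_pow, eval_C, eval_X]
          rw [hRs s hs]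
          ring
        · exact Set.Finite.infinite_compl (Set.finite_singleton 0)
      exact sub_eq_zero.mp hz
    refine ⟨![1, 0, 0], ?_, ?_⟩
    · intro h0
      have := congrFun h0 0
      simp at this
    · rw [← hR 0, hReq]
      simp

def swapEquiv {m n : ℕ} :
    ((Fin m × Fin n) × (Fin m × Fin n)) ≃ ((Fin m × Fin n) × (Fin m × Fin n)) where
  toFun x := ((x.2.1, x.1.2), (x.1.1, x.2.2))
  invFun x := ((x.2.1, x.1.2), (x.1.1, x.2.2))
  left_inv x := rfl
  right_inv x := rfl

lemma sum_swap_aux {m n : ℕ} (F : (Fin m × Fin n) → (Fin m × Fin n) → ℂ) :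
    (∑ p : Fin m × Fin n, ∑ q : Fin m × Fin n, F (q.1, p.2) (p.1, q.2))
      = ∑ p : Fin m × Fin n, ∑ q : Fin m × Fin n, F p q := by
  rw [← Fintype.sum_prod_type' (f := fun p q : Fin m × Fin n => F (q.1, p.2) (p.1, q.2)),
      ← Fintype.sum_prod_type' (f := F)]
  have h := Equiv.sum_comp (swapEquiv (m := m) (n := n)) (fun x => F x.1 x.2)
  simpa [swapEquiv] using h

lemma ptrans_quad {m n : ℕ} (M : Matrix (Fin m × Fin n) (Fin m × Fin n) ℂ)
    (u : Fin m → ℂ) (v : Fin n → ℂ) :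
    star (fun p : Fin m × Fin n => u p.1 * v p.2) ⬝ᵥ
        (ptrans M *ᵥ fun p => u p.1 * v p.2)
      = star (fun p : Fin m × Fin n => star (u p.1) * v p.2) ⬝ᵥ
        (M *ᵥ fun p => star (u p.1) * v p.2) := by
  simp only [dotProduct, mulVec, ptrans, Matrix.of_apply, Pi.star_apply, Finset.mul_sum]
  have h := sum_swap_aux (fun p q : Fin m × Fin n =>
    star (u p.1) * star (v p.2) * M (q.1, p.2) (p.1, q.2) * u q.1 * v q.2)
  calc (∑ p : Fin m × Fin n, ∑ q : Fin m × Fin n,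
        star (u p.1 * v p.2) * (M (q.1, p.2) (p.1, q.2) * (u q.1 * v q.2)))
      = ∑ p : Fin m × Fin n, ∑ q : Fin m × Fin n,
          star (u p.1) * star (v p.2) * M (q.1, p.2) (p.1, q.2) * u q.1 * v q.2 := by
        refine Finset.sum_congr rfl fun p _ => Finset.sum_congr rfl fun q _ => ?_
        simp only [star_mul']
        ring
    _ = ∑ p : Fin m × Fin n, ∑ q : Fin m × Fin n,
          star (u (q.1, p.2).1) * star (v (q.1, p.2).2) * M ((p.1, q.2).1, (q.1, p.2).2)
            ((q.1, p.2).1, (p.1, q.2).2) * u (p.1, q.2).1 * v (p.1, q.2).2 := h.symm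
    _ = _ := by
        refine Finset.sum_congr rfl fun p _ => Finset.sum_congr rfl fun q _ => ?_
        simp only [star_mul', star_star]
        ring

lemma key {M : Matrix (Fin 3 × Fin 4) (Fin 3 × Fin 4) ℂ} (hΓ : (ptrans M).IsHermitian)
    (hM : M.PosSemidef)
    (h4 : (Finset.univ.filter fun i => 0 ≤ hΓ.eigenvalues i).card ≤ 4) : False := by
  set S : Finset (Fin 3 × Fin 4) := Finset.univ.filter fun i => 0 ≤ hΓ.eigenvalues i with hS
  set U : Matrix (Fin 3 × Fin 4) (Fin 3 × Fin 4) ℂ :=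
    (hΓ.eigenvectorUnitary : Matrix (Fin 3 × Fin 4) (Fin 3 × Fin 4) ℂ) with hUdef
  have hcard : Fintype.card S ≤ Fintype.card (Fin 4) := by
    simpa [Fintype.card_coe] using h4
  obtain ⟨e⟩ := Function.Embedding.nonempty_of_card_le hcard
  set w : Fin 4 → (Fin 3 × Fin 4) → ℂ :=
    fun k j => if h : ∃ i : S, e i = k then U j (h.choose : Fin 3 × Fin 4) else 0 with hw
  obtain ⟨u, v, hu, hv, horth⟩ := exists_prod_vec w
  set x : (Fin 3 × Fin 4) → ℂ := fun p => u p.1 * v p.2 with hxdef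
  have hx : x ≠ 0 := by
    obtain ⟨i0, hi0⟩ := Function.ne_iff.mp hu
    obtain ⟨l0, hl0⟩ := Function.ne_iff.mp hv
    intro h0
    have := congrFun h0 (i0, l0)
    simp only [hxdef, Pi.zero_apply] at this
    exact (mul_ne_zero hi0 hl0) this
  set c : (Fin 3 × Fin 4) → ℂ := star U *ᵥ x with hcdef
  have hwi : ∀ i (hi : i ∈ S), w (e ⟨i, hi⟩) = fun j => U j i := by
    intro i hi
    have hex : ∃ i' : S, e i' = e ⟨i, hi⟩ := ⟨⟨i, hi⟩, rfl⟩
    funext j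
    rw [hw]
    dsimp only
    rw [dif_pos hex]
    have h1 : hex.choose = ⟨i, hi⟩ := e.injective hex.choose_spec
    rw [h1]
  have hcS : ∀ i ∈ S, c i = 0 := by
    intro i hi
    have h1 := horth (e ⟨i, hi⟩)
    rw [hwi i hi] at h1
    rw [hcdef]
    show ∑ j, (star U) i j * x j = 0
    rw [← h1]
    exact Finset.sum_congr rfl fun j _ => by rw [Matrix.star_apply]
  have hc : c ≠ 0 := by
    intro h0
    apply hx
    have hUU : U * star U = 1 := (Matrix.mem_unitaryGroup_iff).mp (hΓ.eigenvectorUnitary).2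
    calc x = (U * star U) *ᵥ x := by rw [hUU, Matrix.one_mulVec]
      _ = U *ᵥ (star U *ᵥ x) := by rw [Matrix.mulVec_mulVec]
      _ = 0 := by rw [← hcdef, h0, Matrix.mulVec_zero]
  have hquad : star x ⬝ᵥ (ptrans M *ᵥ x) = ∑ i, (hΓ.eigenvalues i : ℂ) * (star (c i) * c i) := by
    conv_lhs => rw [hΓ.spectral_theorem, Unitary.conjStarAlgAut_apply]
    rw [← hUdef]
    rw [← Matrix.mulVec_mulVec, ← Matrix.mulVec_mulVec]
    rw [Matrix.dotProduct_mulVec (star x) U]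
    have hsc : star x ᵥ* U = star c := by
      rw [hcdef, Matrix.star_mulVec, Matrix.star_eq_conjTranspose, Matrix.conjTranspose_conjTranspose]
    rw [hsc, ← hcdef]
    simp only [Matrix.mulVec_diagonal, dotProduct, Pi.star_apply, Function.comp_apply]
    refine Finset.sum_congr rfl fun i _ => ?_
    rw [show (RCLike.ofReal (hΓ.eigenvalues i) : ℂ) = ((hΓ.eigenvalues i : ℝ) : ℂ) from rfl]
    ring
  have hpos : 0 ≤ star x ⬝ᵥ (ptrans M *ᵥ x) := by
    rw [hxdef, ptrans_quad]
    exact hM.dotProduct_mulVec_nonneg _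
  set t : ℝ := ∑ i, hΓ.eigenvalues i * Complex.normSq (c i) with htdef
  have hsum : star x ⬝ᵥ (ptrans M *ᵥ x) = (t : ℂ) := by
    rw [hquad, htdef]
    push_cast
    refine Finset.sum_congr rfl fun i _ => ?_
    rw [Complex.star_def, mul_comm (starRingEnd ℂ (c i)) (c i), Complex.mul_conj]
  have ht : t < 0 := by
    have h0 : t < ∑ _i : Fin 3 × Fin 4, (0 : ℝ) := by
      apply Finset.sum_lt_sum
      · intro i _
        by_cases hi : i ∈ S
        · rw [hcS i hi]
          simp
        · have hlam : hΓ.eigenvalues i < 0 := by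
            by_contra h
            exact hi (Finset.mem_filter.mpr ⟨Finset.mem_univ i, not_lt.mp h⟩)
          exact mul_nonpos_of_nonpos_of_nonneg hlam.le (Complex.normSq_nonneg _)
      · obtain ⟨i0, hi0⟩ := Function.ne_iff.mp hc
        have hiS : i0 ∉ S := fun h => hi0 (hcS i0 h)
        have hlam : hΓ.eigenvalues i0 < 0 := by
          by_contra h
          exact hiS (Finset.mem_filter.mpr ⟨Finset.mem_univ i0, not_lt.mp h⟩)
        exact ⟨i0, Finset.mem_univ i0,
          mul_neg_of_neg_of_pos hlam (Complex.normSq_pos.mpr hi0)⟩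
    simpa using h0
  rw [hsum] at hpos
  have : (0:ℝ) ≤ t := by exact_mod_cast hpos
  linarith

/-- There is no 3×4 state whose partial transpose has inertia (8,0,4),
nor one with inertia (8,1,3), nor one with inertia (9,0,3). -/
theorem no_inertia_804_813_903 :
    (¬ ∃ (M : Matrix (Fin 3 × Fin 4) (Fin 3 × Fin 4) ℂ)
        (hΓ : (ptrans M).IsHermitian),
      M.PosSemidef ∧ iNeg hΓ = 8 ∧ iZero hΓ = 0 ∧ iPos hΓ = 4) ∧
    (¬ ∃ (M : Matrix (Fin 3 × Fin 4) (Fin 3 × Fin 4) ℂ)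
        (hΓ : (ptrans M).IsHermitian),
      M.PosSemidef ∧ iNeg hΓ = 8 ∧ iZero hΓ = 1 ∧ iPos hΓ = 3) ∧
    (¬ ∃ (M : Matrix (Fin 3 × Fin 4) (Fin 3 × Fin 4) ℂ)
        (hΓ : (ptrans M).IsHermitian),
      M.PosSemidef ∧ iNeg hΓ = 9 ∧ iZero hΓ = 0 ∧ iPos hΓ = 3) := by
  have main : ∀ (M : Matrix (Fin 3 × Fin 4) (Fin 3 × Fin 4) ℂ)
      (hΓ : (ptrans M).IsHermitian), M.PosSemidef → iZero hΓ + iPos hΓ ≤ 4 → False := by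
    intro M hΓ hM hZP
    apply key hΓ hM
    have hsub : (Finset.univ.filter fun i => 0 ≤ hΓ.eigenvalues i) ⊆
        (Finset.univ.filter fun i => hΓ.eigenvalues i = 0) ∪
          (Finset.univ.filter fun i => 0 < hΓ.eigenvalues i) := by
      intro i hi
      simp only [Finset.mem_filter, Finset.mem_union, Finset.mem_univ, true_and] at hi ⊢
      rcases hi.lt_or_eq with h | h
      · exact Or.inr h
      · exact Or.inl h.symm
    calc (Finset.univ.filter fun i => 0 ≤ hΓ.eigenvalues i).card
        ≤ ((Finset.univ.filter fun i => hΓ.eigenvalues i = 0) ∪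
            (Finset.univ.filter fun i => 0 < hΓ.eigenvalues i)).card :=
          Finset.card_le_card hsub
      _ ≤ iZero hΓ + iPos hΓ := Finset.card_union_le _ _
      _ ≤ 4 := hZP
  refine ⟨?_, ?_, ?_⟩ <;> rintro ⟨M, hΓ, hM, -, hZ, hP⟩ <;>
    exact main M hΓ hM (by rw [hZ, hP] <;> norm_num) <;> skip
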